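/- Every set of (r-1)(d+1)+1 points in R^d can be partitioned into r nonempty pairwise disjoint subsets whose convex hulls have a common point. -/

import Mathlib

open scoped Classical
open Finset Module RealInnerProductSpace

lemma euc_sum_apply {ι κ : Type} (s : Finset ι) (f : ι → EuclideanSpace ℝ κ) (j : κ) :
    (∑ i ∈ s, f i) j = ∑ i ∈ s, f i j :=
  map_sum (AddMonoidHom.mk' (fun x : EuclideanSpace ℝ κ => x j) (fun _ _ => rfl)) f s


section helpers
variable {E : Type} [AddCommGroup E] [Module ℝ E]

lemma tv_exists_weights {n : ℕ} (x : Fin n → E) {p : E}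
    (hp : p ∈ convexHull ℝ (Set.range x)) :
    ∃ w : Fin n → ℝ, (∀ i, 0 ≤ w i) ∧ ∑ i, w i = 1 ∧ ∑ i, w i • x i = p := by
  rw [mem_convexHull_iff_exists_fintype] at hp
  obtain ⟨ι, _, w, z, hw0, hw1, hz, hx⟩ := hp
  choose g hg using hz
  refine ⟨fun i => ∑ t ∈ Finset.univ.filter (fun t => g t = i), w t, ?_, ?_, ?_⟩
  · intro i; exact Finset.sum_nonneg fun t _ => hw0 t
  · rw [Finset.sum_fiberwise]; exact hw1
  · rw [← hx]
    rw [← Finset.sum_fiberwise Finset.univ g (fun t => w t • z t)]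
    refine Finset.sum_congr rfl fun i _ => ?_
    rw [Finset.sum_smul]
    refine Finset.sum_congr rfl fun t ht => ?_
    rw [Finset.mem_filter] at ht
    rw [← ht.2, hg]
end helpers

section cb
open Module RealInnerProductSpace
variable {E : Type} [NormedAddCommGroup E] [InnerProductSpace ℝ E] [FiniteDimensional ℝ E]

lemma tv_card_le {ι : Type} [Fintype ι] {z : ι → E} (hz : AffineIndependent ℝ z)
    {p : E} (hp : p ≠ 0) {c : ℝ} (hc : ∀ t, ⟪z t, p⟫ = c) :
    Fintype.card ι ≤ finrank ℝ E := by
  rcases isEmpty_or_nonempty ι with h | h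
  · simp
  obtain ⟨i0⟩ := h
  rw [affineIndependent_iff_linearIndependent_vsub ℝ z i0] at hz
  set W := (ℝ ∙ p)ᗮ with hW
  have hmem : ∀ i : {x : ι // x ≠ i0}, z i.1 - z i0 ∈ W := by
    intro i
    rw [Submodule.mem_orthogonal_singleton_iff_inner_right]
    have h := hc i.1
    have h0 := hc i0
    rw [real_inner_comm] at h h0
    rw [inner_sub_right, h, h0, sub_self]
  have hli : LinearIndependent ℝ (fun i : {x : ι // x ≠ i0} =>
      (⟨z i.1 - z i0, hmem i⟩ : W)) := by
    apply LinearIndependent.of_comp W.subtype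
    simpa [vsub_eq_sub, Function.comp_def] using hz
  have h1 : Fintype.card {x : ι // x ≠ i0} ≤ finrank ℝ W :=
    hli.fintype_card_le_finrank
  have h2 : finrank ℝ (ℝ ∙ p) + finrank ℝ W = finrank ℝ E :=
    Submodule.finrank_add_finrank_orthogonal _
  rw [finrank_span_singleton hp] at h2
  have h3 : Fintype.card {x : ι // x ≠ i0} = Fintype.card ι - 1 := by
    simp [Fintype.card_subtype_compl ]
  have h4 : 1 ≤ Fintype.card ι := Fintype.card_pos_iff.mpr ⟨i0⟩
  omega
end cb


section colorful
variable {E : Type} [NormedAddCommGroup E] [InnerProductSpace ℝ E] [FiniteDimensional ℝ E]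

lemma tv_colorful {n : ℕ} (hn : finrank ℝ E < n)
    (C : Fin n → Finset E) (hC : ∀ i, (0:E) ∈ convexHull ℝ (C i : Set E)) :
    ∃ y : Fin n → E, (∀ i, y i ∈ C i) ∧ (0:E) ∈ convexHull ℝ (Set.range y) := by
  have hne : ∀ i, (C i).Nonempty := by
    intro i
    rcases (C i).eq_empty_or_nonempty with h | h
    · exfalso; have := hC i; rw [h] at this; simp at this
    · exact h
  let Sel := ∀ i : Fin n, {v // v ∈ C i}
  haveI : Nonempty Sel := ⟨fun i => ⟨(hne i).choose, (hne i).choose_spec⟩⟩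
  let f : Sel → ℝ := fun s => Metric.infDist 0 (convexHull ℝ (Set.range fun i => (s i : E)))
  obtain ⟨s0, -, hmin⟩ := Finset.exists_min_image Finset.univ f
    ⟨Classical.arbitrary Sel, Finset.mem_univ _⟩
  set x : Fin n → E := fun i => (s0 i : E) with hx
  set K := convexHull ℝ (Set.range x) with hKdef
  have hKcvx : Convex ℝ K := convex_convexHull ℝ _
  have hKcp : IsCompact K := (Set.finite_range x).isCompact_convexHull ℝ
  have hKne : K.Nonempty := ⟨x ⟨0, by omega⟩, subset_convexHull ℝ _ (Set.mem_range_self _)⟩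
  obtain ⟨p, hpK, hpd⟩ := hKcp.exists_infDist_eq_dist hKne 0
  by_cases hp0 : p = 0
  · exact ⟨x, fun i => (s0 i).2, by rw [hp0] at hpK; exact hpK⟩
  exfalso
  have hf0 : f s0 = ‖p‖ := by rw [show f s0 = Metric.infDist 0 K from rfl, hpd, dist_eq_norm,
    zero_sub, norm_neg]
  have hiInf : ‖(0:E) - p‖ = ⨅ w : K, ‖(0:E) - w‖ := by
    have h1 : (⨅ w : K, ‖(0:E) - w‖) = ⨅ w : K, dist (0:E) w := by
      congr 1; funext w; rw [dist_eq_norm]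
    rw [h1, ← Metric.infDist_eq_iInf, hpd, dist_eq_norm]
  have hvar := (norm_eq_iInf_iff_real_inner_le_zero hKcvx hpK).mp hiInf
  have hvar' : ∀ w ∈ K, ⟪p, p⟫ ≤ ⟪p, w⟫ := by
    intro w hw
    have h := hvar w hw
    rw [zero_sub, inner_neg_left, inner_sub_right] at h
    linarith
  obtain ⟨ι, hFt, z, w, hzr, hzi, hwpos, hw1, hzw⟩ := eq_pos_convex_span_of_mem_convexHull hpK
  letI : Fintype ι := hFt
  have hinner : ∀ t, ⟪z t, p⟫ = ⟪p, p⟫ := by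
    have key : ∑ t, w t * (⟪p, z t⟫ - ⟪p, p⟫) = 0 := by
      have h2 : ⟪p, ∑ t, w t • z t⟫ = ⟪p, p⟫ := by rw [hzw]
      rw [inner_sum] at h2
      simp only [real_inner_smul_right] at h2
      simp only [mul_sub]
      rw [Finset.sum_sub_distrib, h2, ← Finset.sum_mul, hw1, one_mul, sub_self]
    intro t
    have h0 : ∀ t ∈ Finset.univ, (0:ℝ) ≤ w t * (⟪p, z t⟫ - ⟪p, p⟫) := by
      intro t _
      have := hvar' (z t) (subset_convexHull ℝ _ (hzr (Set.mem_range_self t)))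
      exact mul_nonneg (hwpos t).le (by linarith)
    have h3 := (Finset.sum_eq_zero_iff_of_nonneg h0).mp key t (Finset.mem_univ t)
    rcases mul_eq_zero.mp h3 with h | h
    · exact absurd h (ne_of_gt (hwpos t))
    · rw [real_inner_comm]; linarith
  have hcard : Fintype.card ι ≤ finrank ℝ E := tv_card_le hzi hp0 hinner
  choose g hg using fun t => hzr (Set.mem_range_self t)
  have hginj : Function.Injective g := by
    intro s t hst
    apply hzi.injective
    rw [← hg s, ← hg t, hst]
  have hfree : ∃ i0 : Fin n, i0 ∉ Set.range g := by
    by_contra h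
    push_neg at h
    have hsurj : Function.Surjective g := fun i => h i
    have := Fintype.card_le_of_surjective g hsurj
    rw [Fintype.card_fin] at this
    omega
  obtain ⟨i0, hi0⟩ := hfree
  have hy0 : ∃ y0 ∈ C i0, ⟪p, y0⟫ ≤ 0 := by
    by_contra h
    push_neg at h
    obtain ⟨ι', _i', w', z', hw0', hw1', hz', hx'⟩ :=
      mem_convexHull_iff_exists_fintype.mp (hC i0)
    letI : Fintype ι' := _i'
    have hpos : (0:ℝ) < ⟪p, (0:E)⟫ := by
      rw [← hx', inner_sum]
      simp only [real_inner_smul_right]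
      have hex : ∃ t ∈ Finset.univ, (0:ℝ) < w' t * ⟪p, z' t⟫ := by
        have : ∃ t, w' t ≠ 0 := by
          by_contra hall
          push_neg at hall
          rw [Finset.sum_eq_zero (fun t _ => hall t)] at hw1'
          norm_num at hw1'
        obtain ⟨t, ht⟩ := this
        exact ⟨t, Finset.mem_univ t, mul_pos (lt_of_le_of_ne (hw0' t) (Ne.symm ht))
          (h (z' t) (hz' t))⟩
      exact Finset.sum_pos' (fun t _ => mul_nonneg (hw0' t) (h (z' t) (hz' t)).le) hex
    simp at hpos
  obtain ⟨y0, hy0C, hy0ip⟩ := hy0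
  let s1 : Sel := Function.update s0 i0 ⟨y0, hy0C⟩
  set x' : Fin n → E := fun i => (s1 i : E) with hx'def
  have hx'i : ∀ i, i ≠ i0 → x' i = x i := by
    intro i hi
    simp only [hx'def, s1, Function.update_of_ne hi, hx]
  have hx'0 : x' i0 = y0 := by simp [hx'def, s1]
  set K' := convexHull ℝ (Set.range x') with hK'def
  have hpK' : p ∈ K' := by
    apply mem_convexHull_of_exists_fintype w z (fun t => (hwpos t).le) hw1 ?_ hzw
    intro t
    refine ⟨g t, ?_⟩
    rw [hx'i (g t) (fun h => hi0 (h ▸ Set.mem_range_self t)), hg t]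
  have hy0K' : y0 ∈ K' := subset_convexHull ℝ _ ⟨i0, hx'0⟩
  set c := ⟪p, p⟫ with hcdef
  have hnp2 : ‖p‖^2 = c := by rw [hcdef, real_inner_self_eq_norm_sq]
  have hcpos : 0 < c := by rw [← hnp2]; exact pow_pos (norm_pos_iff.mpr hp0) 2
  have hyp : y0 - p ≠ 0 := by
    intro h
    rw [sub_eq_zero] at h
    rw [h] at hy0ip
    linarith
  have hspos : (0:ℝ) < ‖y0 - p‖^2 := pow_pos (norm_pos_iff.mpr hyp) 2
  have hip : ⟪p, y0 - p⟫ ≤ -c := by rw [inner_sub_right]; linarith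
  set T := c / ‖y0 - p‖^2 with hTdef
  have hTpos : 0 < T := div_pos hcpos hspos
  have hs_ge : c ≤ ‖y0 - p‖^2 := by
    have h4 : ‖y0 - p‖^2 = ‖y0‖^2 - 2*⟪y0,p⟫ + ‖p‖^2 := norm_sub_sq_real y0 p
    have h5 : ⟪y0, p⟫ ≤ 0 := by rw [real_inner_comm]; exact hy0ip
    nlinarith [sq_nonneg ‖y0‖]
  have hT1 : T ≤ 1 := (div_le_one hspos).mpr hs_ge
  set q := (1-T) • p + T • y0 with hqdef
  have hqK' : q ∈ K' := (convex_convexHull ℝ _) hpK' hy0K' (by linarith) hTpos.le (by ring)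
  have hq2 : ‖q‖^2 ≤ c - c^2/‖y0-p‖^2 := by
    have hqe : q = p + T • (y0 - p) := by
      rw [hqdef, smul_sub, sub_smul, one_smul]
      abel
    rw [hqe, norm_add_sq_real]
    rw [real_inner_smul_right, norm_smul]
    have hTn : ‖T‖ = T := abs_of_pos hTpos
    rw [hTn, mul_pow]
    have : T * ⟪p, y0 - p⟫ ≤ T * (-c) := by
      exact mul_le_mul_of_nonneg_left hip hTpos.le
    have hT2 : T^2 * ‖y0-p‖^2 = c^2 / ‖y0-p‖^2 := by
      rw [hTdef]; field_simp
    have hTc : T * c = c^2/‖y0-p‖^2 := by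
      rw [hTdef]; field_simp
    linarith
  have hqlt : ‖q‖ < ‖p‖ := by
    have hc2 : 0 < c^2/‖y0-p‖^2 := div_pos (pow_pos hcpos 2) hspos
    nlinarith [norm_nonneg q, norm_nonneg p, hq2, hc2, hnp2]
  have h1 : f s1 ≤ ‖q‖ := by
    have h6 := Metric.infDist_le_dist_of_mem (x := (0:E)) hqK'
    rw [dist_eq_norm, zero_sub, norm_neg] at h6
    exact h6
  have h2 := hmin s1 (Finset.mem_univ _)
  rw [hf0] at h2
  linarith

end colorful

theorem tverberg (r d : ℕ) (hr : 2 ≤ r) (hd : 1 ≤ d)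
    (S : Finset (EuclideanSpace ℝ (Fin d)))
    (hcard : S.card = (r - 1) * (d + 1) + 1) :
    ∃ P : Fin r → Finset (EuclideanSpace ℝ (Fin d)),
      (∀ i, P i ⊆ S) ∧
      (∀ i, (P i).Nonempty) ∧
      (∀ i j, i ≠ j → Disjoint (P i) (P j)) ∧
      (S = Finset.univ.biUnion P) ∧
      (∃ p : EuclideanSpace ℝ (Fin d),
        ∀ i, p ∈ convexHull ℝ (P i : Set (EuclideanSpace ℝ (Fin d)))) := by
  set n := (r - 1) * (d + 1) + 1 with hn
  -- enumeration of S
  let e := S.equivFin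
  let a : Fin n → EuclideanSpace ℝ (Fin d) := fun i => (e.symm (Fin.cast hcard.symm i) : _)
  have ha_mem : ∀ i, a i ∈ S := fun i => (e.symm _).2
  have ha_inj : Function.Injective a := by
    intro i j hij
    have h1 : e.symm (Fin.cast hcard.symm i) = e.symm (Fin.cast hcard.symm j) :=
      Subtype.coe_injective hij
    have h2 := e.symm.injective h1
    simpa [Fin.ext_iff] using congrArg Fin.val h2
  have ha_surj : ∀ s ∈ S, ∃ i, a i = s := by
    intro s hs
    refine ⟨Fin.cast hcard (e ⟨s, hs⟩), ?_⟩
    simp [a]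
  -- the auxiliary vectors in ℝ^(r-1)
  have hr1 : r - 1 < r := by omega
  let kL : Fin r := ⟨r - 1, hr1⟩
  let emb : Fin (r - 1) → Fin r := fun m => ⟨m.1, by omega⟩
  have hembne : ∀ m, emb m ≠ kL := by
    intro m h
    have := congrArg Fin.val h
    simp only [emb, kL] at this
    omega
  let v : Fin r → Fin (r - 1) → ℝ :=
    fun k m => (if k = emb m then 1 else 0) - (if k = kL then 1 else 0)
  have hvsum : ∀ m, ∑ k, v k m = 0 := by
    intro m
    simp only [v, Finset.sum_sub_distrib]
    rw [Finset.sum_ite_eq' Finset.univ (emb m) (fun _ => (1:ℝ)),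
        Finset.sum_ite_eq' Finset.univ kL (fun _ => (1:ℝ))]
    simp
  have hvkey : ∀ wv : Fin r → ℝ, (∀ m, ∑ k, v k m * wv k = 0) → ∀ k, wv k = wv kL := by
    intro wv h k
    by_cases hk : k = kL
    · rw [hk]
    · have hklt : k.1 < r - 1 := by
        have h2 := k.2
        rcases Nat.lt_or_ge k.1 (r-1) with h'|h'
        · exact h'
        · exfalso; exact hk (Fin.ext (by simp [kL]; omega))
      have hm := h ⟨k.1, hklt⟩
      have hembm : emb ⟨k.1, hklt⟩ = k := Fin.ext rfl
      simp only [v, sub_mul, one_mul, zero_mul, ite_mul, Finset.sum_sub_distrib] at hm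
      rw [Finset.sum_ite_eq' Finset.univ (emb ⟨k.1, hklt⟩) wv,
          Finset.sum_ite_eq' Finset.univ kL wv] at hm
      simp only [Finset.mem_univ, if_true, hembm] at hm
      linarith
  -- lifted points
  let u : Fin n → Fin (d + 1) → ℝ := fun i j => if h : (j : ℕ) < d then a i ⟨j, h⟩ else 1
  let E := EuclideanSpace ℝ (Fin (r - 1) × Fin (d + 1))
  let b : Fin n → Fin r → E := fun i k => WithLp.toLp 2 (fun q : Fin (r - 1) × Fin (d + 1) => v k q.1 * u i q.2)
  let C : Fin n → Finset E := fun i => Finset.image (b i) Finset.univ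
  have hrpos : (0:ℝ) < r := by positivity
  have hC : ∀ i, (0:E) ∈ convexHull ℝ (C i : Set E) := by
    intro i
    apply mem_convexHull_of_exists_fintype (fun _ : Fin r => (r:ℝ)⁻¹) (b i)
    · intro _; positivity
    · rw [Finset.sum_const]
      simp only [Finset.card_univ, Fintype.card_fin, nsmul_eq_mul]
      field_simp
    · intro k
      exact Finset.mem_coe.mpr (Finset.mem_image_of_mem _ (Finset.mem_univ k))
    · ext q
      rw [euc_sum_apply]
      have : ∀ k : Fin r, ((r:ℝ)⁻¹ • b i k) q = (r:ℝ)⁻¹ * u i q.2 * v k q.1 := by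
        intro k
        show (r:ℝ)⁻¹ * (v k q.1 * u i q.2) = _
        ring
      rw [Finset.sum_congr rfl (fun k _ => this k), ← Finset.mul_sum, hvsum]
      simp only [mul_zero]
      rfl
  have hfr : finrank ℝ E < n := by
    have : finrank ℝ E = (r-1) * (d+1) := by
      simp [E, finrank_euclideanSpace]
    omega
  obtain ⟨y, hyC, hy0⟩ := tv_colorful hfr C hC
  have hk' : ∀ i, ∃ kk, b i kk = y i := by
    intro i
    obtain ⟨kk, _, hkk⟩ := Finset.mem_image.mp (hyC i)
    exact ⟨kk, hkk⟩
  choose k hk using hk'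
  obtain ⟨w, hw0, hw1, hwsum⟩ := tv_exists_weights y hy0
  have hbsum : ∑ i, w i • b i (k i) = 0 := by
    rw [show (fun i => w i • b i (k i)) = fun i => w i • y i from funext fun i => by rw [hk i]]
    exact hwsum
  -- class sums
  let F : Fin r → Finset (Fin n) := fun c => Finset.univ.filter (fun i => k i = c)
  let W : Fin r → Fin (d + 1) → ℝ := fun c j => ∑ i ∈ F c, w i * u i j
  have hWeq : ∀ c j, W c j = W kL j := by
    intro c j
    apply hvkey (fun c => W c j)
    intro m
    have expand : ∑ c, v c m * W c j = ∑ i, v (k i) m * (w i * u i j) := by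
      rw [← Finset.sum_fiberwise Finset.univ k (fun i => v (k i) m * (w i * u i j))]
      refine Finset.sum_congr rfl fun c _ => ?_
      rw [Finset.mul_sum]
      refine Finset.sum_congr rfl fun i hi => ?_
      rw [(Finset.mem_filter.mp hi).2]
    have hcoord : ∑ i, (w i • b i (k i)) (m, j) = 0 := by
      rw [← euc_sum_apply, hbsum]
      rfl
    rw [expand, ← hcoord]
    refine Finset.sum_congr rfl fun i _ => ?_
    show v (k i) m * (w i * u i j) = w i * (v (k i) m * u i j)
    ring
  -- last coordinate
  let jL : Fin (d + 1) := ⟨d, by omega⟩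
  have hulast : ∀ i, u i jL = 1 := by
    intro i
    simp only [u, jL]
    rw [dif_neg (by omega)]
  have htsum : ∑ c, W c jL = 1 := by
    have : ∀ c, W c jL = ∑ i ∈ F c, w i := by
      intro c
      refine Finset.sum_congr rfl fun i _ => ?_
      rw [hulast i, mul_one]
    rw [Finset.sum_congr rfl (fun c _ => this c),
      Finset.sum_fiberwise Finset.univ k (fun i => w i), hw1]
  have htval : ∀ c, W c jL = 1 / r := by
    have hsum2 : (r:ℝ) * W kL jL = 1 := by
      rw [← htsum, Finset.sum_congr rfl (fun c _ => hWeq c jL), Finset.sum_const]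
      simp [mul_comm]
    intro c
    rw [hWeq c jL]
    field_simp
    linarith
  have hFne : ∀ c, (F c).Nonempty := by
    intro c
    rcases (F c).eq_empty_or_nonempty with h | h
    · exfalso
      have h1 := htval c
      have : W c jL = 0 := by
        simp only [W, h, Finset.sum_empty]
      rw [this] at h1
      have : (1:ℝ)/r > 0 := by positivity
      linarith
    · exact h
  -- the partition
  let P : Fin r → Finset (EuclideanSpace ℝ (Fin d)) := fun c => (F c).image a
  have hmemP : ∀ c i, i ∈ F c → a i ∈ P c := fun c i hi => Finset.mem_image_of_mem a hi
  refine ⟨P, ?_, ?_, ?_, ?_, ?_⟩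
  · intro c s hs
    obtain ⟨i, _, rfl⟩ := Finset.mem_image.mp hs
    exact ha_mem i
  · intro c
    exact (hFne c).image a
  · intro c c' hcc'
    rw [Finset.disjoint_left]
    intro s hs hs'
    obtain ⟨i, hi, rfl⟩ := Finset.mem_image.mp hs
    obtain ⟨i', hi', he⟩ := Finset.mem_image.mp hs'
    have hii : i' = i := ha_inj he
    rw [Finset.mem_filter] at hi hi'
    rw [hii] at hi'
    exact hcc' (hi.2 ▸ hi'.2 ▸ rfl)
  · apply Finset.ext
    intro s
    constructor
    · intro hs
      obtain ⟨i, rfl⟩ := ha_surj s hs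
      exact Finset.mem_biUnion.mpr ⟨k i, Finset.mem_univ _,
        hmemP (k i) i (Finset.mem_filter.mpr ⟨Finset.mem_univ i, rfl⟩)⟩
    · intro hs
      obtain ⟨c, _, hc⟩ := Finset.mem_biUnion.mp hs
      obtain ⟨i, _, rfl⟩ := Finset.mem_image.mp hc
      exact ha_mem i
  · -- the common point
    let p : EuclideanSpace ℝ (Fin d) := WithLp.toLp 2 (fun j' : Fin d => r * W kL ⟨j'.1, by omega⟩)
    refine ⟨p, fun c => ?_⟩
    apply mem_convexHull_of_exists_fintype (ι := {i // i ∈ F c})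
      (fun i => r * w i.1) (fun i => a i.1)
    · intro i
      have := hw0 i.1
      positivity
    · rw [← Finset.mul_sum]
      rw [Finset.sum_coe_sort (F c) (fun i => w i)]
      have h2 : ∑ i ∈ F c, w i = W c jL := by
        refine (Finset.sum_congr rfl fun i _ => ?_).symm
        rw [hulast i, mul_one]
      rw [h2, htval c]
      field_simp
    · intro i
      exact Finset.mem_coe.mpr (hmemP c i.1 i.2)
    · ext j'
      rw [euc_sum_apply]
      have hterm : ∀ i : {i // i ∈ F c}, ((r * w i.1) • a i.1) j' = r * (w i.1 * u i.1 ⟨j'.1, by omega⟩) := by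
        intro i
        show (r * w i.1) * a i.1 j' = _
        have : u i.1 ⟨j'.1, by omega⟩ = a i.1 j' := by
          simp only [u]
          rw [dif_pos j'.2]
        rw [this]
        ring
      rw [Finset.sum_congr rfl (fun i _ => hterm i), ← Finset.mul_sum]
      rw [Finset.sum_coe_sort (F c) (fun i => w i * u i ⟨j'.1, by omega⟩)]
      show (r:ℝ) * W c ⟨j'.1, _⟩ = p j'
      rw [hWeq c]
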